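/- Let k ≥ 2 and q ≥ 3 be integers. Then the ℚ-linear span of the set {1, δ_k ζ(k)} ∪ {ζ⁻(k, a/q) : a ∈ ℤ, 1 ≤ a < q/2} equals ℚ + V_k⁻(q). In particular, if k is odd then ζ(k) ∈ V_k⁻(q). -/

import Mathlib

open Finset

/-- The Hurwitz zeta value `ζ(k, x) = ∑_{m ≥ 0} 1/(m+x)^k`. -/
noncomputable def hzeta (k : ℕ) (x : ℝ) : ℝ := ∑' m : ℕ, 1 / ((m : ℝ) + x) ^ k

/-- The odd part `ζ⁻(k, a/q) = ζ(k, a/q) − (−1)^k ζ(k, 1 − a/q)`. -/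
noncomputable def zetaMinus (k a q : ℕ) : ℝ :=
  hzeta k ((a : ℝ) / q) - (-1 : ℝ) ^ k * hzeta k (1 - (a : ℝ) / q)

/-- The even part `ζ⁺(k, a/q) = ζ(k, a/q) + (−1)^k ζ(k, 1 − a/q)`. -/
noncomputable def zetaPlus (k a q : ℕ) : ℝ :=
  hzeta k ((a : ℝ) / q) + (-1 : ℝ) ^ k * hzeta k (1 - (a : ℝ) / q)

/-- `V_k⁻(q)` for `q ≥ 3`; for `q = 2` it is defined as `ℚ · ζ⁻(k, 1/2)`. -/
noncomputable def Vminus (k q : ℕ) : Submodule ℚ ℝ :=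
  if q = 2 then Submodule.span ℚ {zetaMinus k 1 2}
  else Submodule.span ℚ
    {x : ℝ | ∃ a : ℕ, 1 ≤ a ∧ 2 * a < q ∧ Nat.gcd a q = 1 ∧ x = zetaMinus k a q}

/-- `V_k⁺(q)` for `q ≥ 3`; for `q = 2` it is defined as `ℚ · ζ⁺(k, 1/2)`. -/
noncomputable def Vplus (k q : ℕ) : Submodule ℚ ℝ :=
  if q = 2 then Submodule.span ℚ {zetaPlus k 1 2}
  else Submodule.span ℚ
    {x : ℝ | ∃ a : ℕ, 1 ≤ a ∧ 2 * a < q ∧ Nat.gcd a q = 1 ∧ x = zetaPlus k a q}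

/-- `V_k(q)`, the ℚ-span of `ζ(k, a/q)` for `1 ≤ a < q` coprime to `q`
(for `q = 2` this gives `ℚ · ζ(k, 1/2)` as well). -/
noncomputable def Vfull (k q : ℕ) : Submodule ℚ ℝ :=
  Submodule.span ℚ
    {x : ℝ | ∃ a : ℕ, 1 ≤ a ∧ a < q ∧ Nat.gcd a q = 1 ∧ x = hzeta k ((a : ℝ) / q)}

lemma summable_hz {k : ℕ} (hk : 2 ≤ k) {x : ℝ} (hx : 0 < x) :
    Summable (fun m : ℕ => 1 / ((m : ℝ) + x) ^ k) := by
  rw [← summable_nat_add_iff 1]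
  have hg : Summable (fun m : ℕ => 1 / ((m : ℝ) + 1) ^ k) := by
    have := (Real.summable_one_div_nat_pow (p := k)).mpr (by omega)
    rw [← summable_nat_add_iff 1] at this
    exact this.congr (by intro m; push_cast; ring_nf)
  refine hg.of_nonneg_of_le (fun m => by positivity) (fun m => ?_)
  have h1 : (0:ℝ) < (m:ℝ) + 1 := by positivity
  have h2 : ((m:ℝ) + 1) ≤ ((m:ℝ) + 1 + x) := by linarith
  push_cast
  rw [div_le_div_iff₀ (by positivity) (by positivity)]
  have := pow_le_pow_left₀ h1.le h2 k
  nlinarith [pow_pos h1 k, pow_pos (by linarith : (0:ℝ) < (m:ℝ)+1+x) k]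

lemma hzeta_pos {k : ℕ} (hk : 2 ≤ k) {x : ℝ} (hx : 0 < x) : 0 < hzeta k x := by
  refine Summable.tsum_pos (summable_hz hk hx) (fun m => by positivity) 0 (by positivity)

lemma sum_zmod_val {n : ℕ} [NeZero n] (g : ℕ → ℝ) :
    ∑ j : ZMod n, g j.val = ∑ j ∈ Finset.range n, g j := by
  refine Finset.sum_nbij' (fun j => j.val) (fun a => (a : ZMod n)) ?_ ?_ ?_ ?_ ?_
  · intro a _; exact Finset.mem_range.mpr (ZMod.val_lt a)
  · intro a _; exact Finset.mem_univ _
  · intro a _; exact ZMod.natCast_zmod_val a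
  · intro a ha; exact ZMod.val_cast_of_lt (Finset.mem_range.mp ha)
  · intro a _; rfl

lemma hzeta_mult {k n : ℕ} (hk : 2 ≤ k) (hn : 0 < n) {x : ℝ} (hx : 0 < x) :
    ∑ j ∈ Finset.range n, hzeta k ((x + j) / n) = (n : ℝ) ^ k * hzeta k x := by
  haveI : NeZero n := ⟨hn.ne'⟩
  set F : ℕ → ℝ := fun t => 1 / ((t : ℝ) + x) ^ k with hFdef
  have hF : Summable F := summable_hz hk hx
  have hn' : (0:ℝ) < n := by exact_mod_cast hn
  have hterm : ∀ j : ℕ, j < n → hzeta k ((x + j) / n)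
      = (n : ℝ) ^ k * ∑' m : ℕ, F (j + n * m) := by
    intro j _
    rw [hzeta, ← tsum_mul_left]
    congr 1; ext m
    have hA : (0:ℝ) < ((j + n * m : ℕ) : ℝ) + x := by positivity
    have he : (m : ℝ) + (x + j) / n = (((j + n * m : ℕ) : ℝ) + x) / n := by
      push_cast; field_simp; ring
    rw [he, div_pow]
    show 1 / _ = _ * (1 / _)
    rw [one_div_div, mul_one_div]
  have key := Nat.sumByResidueClasses hF n
  have key2 : hzeta k x = ∑ j ∈ Finset.range n, ∑' m : ℕ, F (j + n * m) := by
    rw [hzeta]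
    have : ∀ j : ℕ, (∑' m : ℕ, F (j + n * m)) = ∑' m : ℕ, F (j + n * m) := fun _ => rfl
    rw [show (∑' m : ℕ, 1 / ((m : ℝ) + x) ^ k) = ∑' t, F t from rfl, key,
      ← sum_zmod_val (fun j => ∑' m : ℕ, F (j + n * m))]
  rw [key2, Finset.mul_sum]
  exact Finset.sum_congr rfl (fun j hj => hterm j (Finset.mem_range.mp hj))

noncomputable def zm (k : ℕ) (x : ℝ) : ℝ := hzeta k x - (-1 : ℝ) ^ k * hzeta k (1 - x)

lemma zetaMinus_eq_zm (k a q : ℕ) : zetaMinus k a q = zm k ((a : ℝ) / q) := rfl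

lemma neg_one_pow_sq (k : ℕ) : (-1 : ℝ) ^ k * (-1 : ℝ) ^ k = 1 := by
  rcases Nat.even_or_odd k with h | h
  · rw [h.neg_one_pow]; norm_num
  · rw [h.neg_one_pow]; norm_num

lemma zm_symm (k : ℕ) (x : ℝ) : zm k (1 - x) = -(-1 : ℝ) ^ k * zm k x := by
  have := neg_one_pow_sq k
  rw [zm, zm, sub_sub_cancel]
  linear_combination (-(hzeta k (1 - x))) * this

lemma zm_mult {k n : ℕ} (hk : 2 ≤ k) (hn : 0 < n) {x : ℝ} (hx : 0 < x) (hx1 : x < 1) :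
    ∑ j ∈ Finset.range n, zm k ((x + j) / n) = (n : ℝ) ^ k * zm k x := by
  have h1 : ∑ j ∈ Finset.range n, hzeta k ((x + j) / n) = (n : ℝ) ^ k * hzeta k x :=
    hzeta_mult hk hn hx
  have h2 : ∑ j ∈ Finset.range n, hzeta k (((1 - x) + j) / n) = (n : ℝ) ^ k * hzeta k (1 - x) :=
    hzeta_mult hk hn (by linarith)
  have hn' : (0:ℝ) < n := by exact_mod_cast hn
  have h3 : ∀ j ∈ Finset.range n, zm k ((x + j) / n)
      = hzeta k ((x + j) / n) - (-1:ℝ)^k * hzeta k (((1 - x) + (n - 1 - j : ℕ)) / n) := by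
    intro j hj
    have hj' : j < n := Finset.mem_range.mp hj
    have hcast : ((n - 1 - j : ℕ) : ℝ) = (n : ℝ) - 1 - j := by
      rw [show n - 1 - j = n - (1 + j) from by omega, Nat.cast_sub (by omega)]
      push_cast; ring
    rw [zm]
    congr 2
    rw [hcast]
    field_simp
    ring
  rw [Finset.sum_congr rfl h3, Finset.sum_sub_distrib, h1, ← Finset.mul_sum,
    Finset.sum_range_reflect (fun j => hzeta k (((1 - x) + j) / n)) n, h2, zm]
  ring

lemma hzeta_half {k : ℕ} (hk : 2 ≤ k) : hzeta k (1/2 : ℝ) = ((2:ℝ)^k - 1) * hzeta k 1 := by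
  have := hzeta_mult (n := 2) hk (by norm_num) (x := 1) (by norm_num)
  rw [Finset.sum_range_succ, Finset.sum_range_one] at this
  norm_num at this
  linarith

lemma zm_half {k : ℕ} (hk : 2 ≤ k) :
    zm k (1/2 : ℝ) = (1 - (-1:ℝ)^k) * ((2:ℝ)^k - 1) * hzeta k 1 := by
  rw [zm, show (1:ℝ) - 1/2 = 1/2 by norm_num, hzeta_half hk]
  ring

lemma ratmul_mem (W : Submodule ℚ ℝ) (c : ℚ) {w : ℝ} (hw : w ∈ W) : (c : ℝ) * w ∈ W := by
  have := W.smul_mem c hw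
  rwa [Rat.smul_def] at this

lemma gen_mem {k q a : ℕ} (hq : 3 ≤ q) (h1 : 1 ≤ a) (h2 : 2 * a < q)
    (h3 : Nat.gcd a q = 1) : zetaMinus k a q ∈ Vminus k q := by
  rw [Vminus, if_neg (by omega)]
  exact Submodule.subset_span ⟨a, h1, h2, h3, rfl⟩

lemma zm_mem_of_coprime {k q b : ℕ} (hq : 3 ≤ q) (h1 : 1 ≤ b) (hb : b < q)
    (h3 : Nat.gcd b q = 1) : zm k ((b : ℝ) / q) ∈ Vminus k q := by
  have hq0 : (0:ℝ) < q := by positivity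
  rcases lt_trichotomy (2 * b) q with h | h | h
  · rw [← zetaMinus_eq_zm]; exact gen_mem hq h1 h h3
  · exfalso
    have : b ∣ q := ⟨2, by omega⟩
    have := Nat.gcd_eq_left this
    omega
  · have hc1 : 1 ≤ q - b := by omega
    have hc2 : 2 * (q - b) < q := by omega
    have hc3 : Nat.gcd (q - b) q = 1 := by
      have h4 : Nat.Coprime (q - b) b :=
        (Nat.coprime_sub_self_left hb.le).mpr (Nat.coprime_comm.mp h3)
      have h5 : Nat.Coprime (q - b) (b + (q - b)) := Nat.coprime_add_self_right.mpr h4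
      rwa [show b + (q - b) = q from by omega] at h5
    have hfrac : (b : ℝ) / q = 1 - ((q - b : ℕ) : ℝ) / q := by
      rw [Nat.cast_sub (by omega)]
      field_simp
      ring
    rw [hfrac, zm_symm]
    have hcast : -(-1:ℝ)^k = (((-(-1)^k : ℚ)) : ℝ) := by push_cast; ring
    rw [hcast, ← zetaMinus_eq_zm]
    exact ratmul_mem _ _ (gen_mem hq hc1 hc2 hc3)

lemma iterate_mem (W : Submodule ℚ ℝ) {B : Type} [Finite B]
    (u : B → ℝ) (σ : B → B) (α : B → ℚ)
    (hα : ∀ b, |(α b : ℝ)| < 1)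
    (hrel : ∀ b, ∃ w ∈ W, u b = (α b : ℝ) * u (σ b) + w) :
    ∀ b, u b ∈ W := by
  have step1 : ∀ (n : ℕ) (b : B), ∃ w ∈ W,
      u b = ((∏ m ∈ Finset.range n, α (σ^[m] b) : ℚ) : ℝ) * u (σ^[n] b) + w := by
    intro n b
    induction n with
    | zero => exact ⟨0, W.zero_mem, by simp⟩
    | succ n ih =>
      obtain ⟨w, hwW, hw⟩ := ih
      obtain ⟨w', hw'W, hw'⟩ := hrel (σ^[n] b)
      refine ⟨((∏ m ∈ Finset.range n, α (σ^[m] b) : ℚ) : ℝ) * w' + w,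
        W.add_mem (ratmul_mem _ _ hw'W) hwW, ?_⟩
      rw [Finset.prod_range_succ, Function.iterate_succ_apply', hw, hw']
      push_cast
      ring
  have step4 : ∀ (i : ℕ) (b : B), u (σ^[i] b) ∈ W → u b ∈ W := by
    intro i
    induction i with
    | zero => intro b h; simpa using h
    | succ i ih =>
      intro b h
      rw [Function.iterate_succ_apply] at h
      have h2 : u (σ b) ∈ W := ih (σ b) h
      obtain ⟨w, hwW, hw⟩ := hrel b
      rw [hw]
      exact W.add_mem (ratmul_mem _ _ h2) hwW
  intro b
  obtain ⟨i, j, hne, heq⟩ := Finite.exists_ne_map_eq_of_infinite (fun n : ℕ => σ^[n] b)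
  wlog hij : i < j generalizing i j
  · exact this j i hne.symm heq.symm (by omega)
  have hfix : σ^[j - i] (σ^[i] b) = σ^[i] b := by
    rw [← Function.iterate_add_apply, show j - i + i = j from by omega]
    exact heq.symm
  set b' := σ^[i] b with hb'
  obtain ⟨w, hwW, hw⟩ := step1 (j - i) b'
  rw [hfix] at hw
  set P : ℚ := ∏ m ∈ Finset.range (j - i), α (σ^[m] b') with hP
  have hPlt : |(P : ℝ)| < 1 := by
    obtain ⟨n', hn'⟩ : ∃ n', j - i = n' + 1 := ⟨j - i - 1, by omega⟩
    rw [hP, hn']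
    push_cast
    rw [abs_prod, Finset.prod_range_succ']
    have hle : ∏ m ∈ Finset.range n', |((α (σ^[m + 1] b') : ℝ))| ≤ 1 :=
      Finset.prod_le_one (fun m _ => abs_nonneg _) (fun m _ => (hα _).le)
    simp only [Function.iterate_zero_apply]
    calc (∏ m ∈ Finset.range n', |((α (σ^[m + 1] b') : ℝ))|) * |(α b' : ℝ)|
        ≤ 1 * |(α b' : ℝ)| := by
          exact mul_le_mul_of_nonneg_right hle (abs_nonneg _)
      _ < 1 := by rw [one_mul]; exact hα b'
  have hPne : (1 : ℚ) - P ≠ 0 := by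
    intro hcon
    have : P = 1 := by linarith [sub_eq_zero.mp hcon]
    rw [this] at hPlt; norm_num at hPlt
  have hub' : u b' ∈ W := by
    have heq2 : ((1 - P : ℚ) : ℝ) * u b' = w := by push_cast; nlinarith [hw]
    have hne' : (1 - (P : ℝ)) ≠ 0 := by exact_mod_cast hPne
    have hthis : (((1 - P)⁻¹ : ℚ) : ℝ) * w = u b' := by
      rw [← heq2]
      push_cast
      rw [← mul_assoc, inv_mul_cancel₀ hne', one_mul]
    rw [← hthis]
    exact ratmul_mem _ _ hwW
  exact step4 i b hub'

lemma zm_reflect {k q c : ℕ} (hq : 3 ≤ q) (h1 : 1 ≤ c) (h2 : c < q) (h3 : Nat.gcd c q = 1) :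
    ∃ c' : ℕ, ∃ ε : ℚ, 1 ≤ c' ∧ 2 * c' < q ∧ Nat.gcd c' q = 1 ∧ |ε| = 1 ∧
      zm k ((c : ℝ) / q) = (ε : ℝ) * zm k ((c' : ℝ) / q) := by
  rcases lt_trichotomy (2 * c) q with h | h | h
  · exact ⟨c, 1, h1, h, h3, by norm_num, by norm_num⟩
  · exfalso
    have : c ∣ q := ⟨2, by omega⟩
    have := Nat.gcd_eq_left this
    omega
  · have hc1 : 1 ≤ q - c := by omega
    have hc2 : 2 * (q - c) < q := by omega
    have hc3 : Nat.gcd (q - c) q = 1 := by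
      have h4 : Nat.Coprime (q - c) c :=
        (Nat.coprime_sub_self_left h2.le).mpr (Nat.coprime_comm.mp h3)
      have h5 : Nat.Coprime (q - c) (c + (q - c)) := Nat.coprime_add_self_right.mpr h4
      rwa [show c + (q - c) = q from by omega] at h5
    refine ⟨q - c, -(-1)^k, hc1, hc2, hc3, by simp [abs_pow], ?_⟩
    have hq0 : (0:ℝ) < q := by positivity
    have hfrac : (c : ℝ) / q = 1 - ((q - c : ℕ) : ℝ) / q := by
      rw [Nat.cast_sub (by omega)]
      field_simp
      ring
    rw [hfrac, zm_symm]
    push_cast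
    ring

lemma zm_expand {k p q' b : ℕ} (hk : 2 ≤ k) (hp : 0 < p) (hq' : 3 ≤ q')
    (h1 : 1 ≤ b) (h2 : b < q') :
    zm k ((b : ℝ) / q') = (((p : ℝ)) ^ k)⁻¹ *
      ∑ j ∈ Finset.range p, zm k (((b + j * q' : ℕ) : ℝ) / ((p * q' : ℕ) : ℝ)) := by
  have hq0 : (0:ℝ) < q' := by positivity
  have hp0 : (0:ℝ) < p := by exact_mod_cast hp
  have hx : (0:ℝ) < (b : ℝ) / q' := by positivity
  have hx1 : (b : ℝ) / q' < 1 := by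
    rw [div_lt_one hq0]; exact_mod_cast h2
  have h := zm_mult hk hp hx hx1
  have hterm : ∀ j ∈ Finset.range p,
      zm k (((b : ℝ) / q' + j) / p) = zm k (((b + j * q' : ℕ) : ℝ) / ((p * q' : ℕ) : ℝ)) := by
    intro j _
    congr 1
    push_cast
    rw [div_add' _ _ _ hq0.ne', div_div]
    congr 1
    ring
  rw [Finset.sum_congr rfl hterm] at h
  rw [h, inv_mul_cancel_left₀ (by positivity)]

lemma inv_pow_mem (W : Submodule ℚ ℝ) (p k : ℕ) {w : ℝ} (hw : w ∈ W) :
    ((p : ℝ) ^ k)⁻¹ * w ∈ W := by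
  have hc : ((p : ℝ) ^ k)⁻¹ = ((((p : ℚ) ^ k)⁻¹ : ℚ) : ℝ) := by push_cast; ring
  rw [hc]
  exact ratmul_mem _ _ hw

lemma coprime_step {p q' b j : ℕ} (hp : p.Prime) (hb3 : Nat.gcd b q' = 1)
    (hnd : ¬ p ∣ (b + j * q')) : Nat.gcd (b + j * q') (p * q') = 1 := by
  have hco' : Nat.Coprime (b + j * q') q' :=
    (Nat.coprime_add_mul_right_left b q' j).mpr hb3
  set g := Nat.gcd (b + j * q') (p * q') with hg
  have h1 : g ∣ p := by
    refine Nat.Coprime.dvd_of_dvd_mul_right ?_ (Nat.gcd_dvd_right _ _)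
    exact Nat.Coprime.coprime_dvd_left (Nat.gcd_dvd_left _ _) hco'
  rcases (Nat.Prime.eq_one_or_self_of_dvd hp g h1) with h | h
  · exact h
  · exfalso
    exact hnd (h ▸ Nat.gcd_dvd_left _ _)

lemma bj_lt {p q' b j : ℕ} (hb : b < q') (hj : j < p) : b + j * q' < p * q' := by
  have hstep : j * q' + q' ≤ p * q' := by
    have h0 := Nat.mul_le_mul_right q' (show j + 1 ≤ p by omega)
    rwa [Nat.succ_mul] at h0
  omega

lemma Vminus_le {k p q' : ℕ} (hk : 2 ≤ k) (hp : p.Prime) (hq' : 3 ≤ q') :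
    Vminus k q' ≤ Vminus k (p * q') := by
  have hp2 : 2 ≤ p := hp.two_le
  have hq : 3 ≤ p * q' := le_trans hq' (Nat.le_mul_of_pos_left _ hp.pos)
  rw [Vminus, if_neg (by omega)]
  rw [Submodule.span_le]
  rintro x ⟨b, hb1, hb2, hb3, rfl⟩
  rw [zetaMinus_eq_zm]
  show zm k ((b : ℝ) / q') ∈ Vminus k (p * q')
  by_cases hpq : p ∣ q'
  · -- case A : all terms coprime to p * q'
    rw [zm_expand hk hp.pos hq' hb1 (by omega)]
    refine inv_pow_mem _ _ _ (Submodule.sum_mem _ ?_)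
    intro j hj
    have hjp : j < p := Finset.mem_range.mp hj
    have hnd : ¬ p ∣ (b + j * q') := by
      intro hd
      have hd2 : p ∣ j * q' := Dvd.dvd.mul_left hpq j
      have hpb : p ∣ b := by
        have h0 := Nat.dvd_sub hd hd2
        rwa [Nat.add_sub_cancel] at h0
      have h1 : p ∣ Nat.gcd b q' := Nat.dvd_gcd hpb hpq
      rw [hb3] at h1
      exact absurd (Nat.le_of_dvd one_pos h1) (by omega)
    exact zm_mem_of_coprime hq (by omega) (bj_lt (by omega) hjp) (coprime_step hp hb3 hnd)
  · -- case B : iterate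
    haveI : Fact p.Prime := ⟨hp⟩
    haveI : NeZero p := ⟨hp.pos.ne'⟩
    have hqz : ((q' : ZMod p)) ≠ 0 := by
      rw [Ne, ZMod.natCast_eq_zero_iff]
      exact hpq
    set W := Vminus k (p * q') with hW
    let Bt := {n : ℕ // 1 ≤ n ∧ 2 * n < q' ∧ Nat.gcd n q' = 1}
    haveI : Finite Bt := by
      refine Finite.of_injective (fun x : Bt => (⟨x.1, by omega⟩ : Fin q')) ?_
      intro x y hxy
      exact Subtype.ext (congrArg Fin.val hxy)
    set u : Bt → ℝ := fun bb => zm k ((bb.1 : ℝ) / q') with hu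
    have key : ∀ bb : Bt, ∃ (cc : Bt) (α : ℚ), |(α : ℝ)| < 1 ∧
        ∃ w ∈ W, u bb = (α : ℝ) * u cc + w := by
      rintro ⟨b, hb1, hb2, hb3⟩
      set j' : ℕ := ((-(b : ZMod p)) * (q' : ZMod p)⁻¹).val with hj'
      have hjlt : j' < p := ZMod.val_lt _
      have hdvd : p ∣ b + j' * q' := by
        rw [← ZMod.natCast_eq_zero_iff]
        push_cast
        rw [hj', ZMod.natCast_zmod_val]
        field_simp
        ring
      have hcopbj : Nat.Coprime (b + j' * q') q' :=
        (Nat.coprime_add_mul_right_left b q' j').mpr hb3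
      -- c and its properties
      set c : ℕ := (b + j' * q') / p with hc
      have hpc : p * c = b + j' * q' := Nat.mul_div_cancel' hdvd
      have hc1 : 1 ≤ c := by
        rcases Nat.eq_zero_or_pos c with h | h
        · rw [h, Nat.mul_zero] at hpc; omega
        · exact h
      have hcq : c < q' := by
        have hstep : j' * q' + q' ≤ p * q' := by
          have h0 := Nat.mul_le_mul_right q' (show j' + 1 ≤ p by omega)
          rwa [Nat.succ_mul] at h0
        have h2 : p * c < p * q' := by omega
        exact Nat.lt_of_mul_lt_mul_left h2
      have hccop : Nat.gcd c q' = 1 := by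
        have h1 : Nat.gcd c q' ∣ b + j' * q' := dvd_trans (Nat.gcd_dvd_left _ _) ⟨p, by rw [← hpc]; exact Nat.mul_comm p c⟩
        have h2 : Nat.gcd c q' ∣ Nat.gcd (b + j' * q') q' :=
          Nat.dvd_gcd h1 (Nat.gcd_dvd_right _ _)
        rw [hcopbj] at h2
        exact Nat.eq_one_of_dvd_one h2
      obtain ⟨c', ε, hc'1, hc'2, hc'3, hεabs, hεeq⟩ := zm_reflect (k := k) hq' hc1 hcq hccop
      refine ⟨⟨c', hc'1, hc'2, hc'3⟩, ε * ((p : ℚ) ^ k)⁻¹, ?_, ?_⟩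
      · have h1 : (1:ℝ) < (p:ℝ)^k := by
          have : (2:ℝ) ≤ (p:ℝ) := by exact_mod_cast hp2
          calc (1:ℝ) < 2^k := by
                have : (2:ℝ)^0 < 2^k := by
                  apply pow_lt_pow_right₀ (by norm_num) (by omega)
                simpa using this
            _ ≤ (p:ℝ)^k := by
                apply pow_le_pow_left₀ (by norm_num) this
        have habs2 : |((ε:ℝ))| = 1 := by
          have h0 := congrArg (fun t : ℚ => (t : ℝ)) hεabs
          push_cast at h0
          simpa using h0
        push_cast
        rw [abs_mul, habs2, one_mul, abs_inv, abs_pow,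
          abs_of_nonneg (by positivity : (0:ℝ) ≤ (p:ℝ)), inv_lt_one_iff₀]
        right; exact h1
      · -- the relation
        have hexp := zm_expand (p := p) hk hp.pos hq' hb1 (by omega)
        have hjmem : j' ∈ Finset.range p := Finset.mem_range.mpr hjlt
        rw [← Finset.sum_erase_add _ _ hjmem] at hexp
        have hfrac : ((b + j' * q' : ℕ) : ℝ) / ((p * q' : ℕ) : ℝ) = (c : ℝ) / q' := by
          have : ((b + j' * q' : ℕ) : ℝ) = (p : ℝ) * c := by
            rw [← hpc]; push_cast; ring
          rw [this]
          push_cast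
          rw [mul_div_mul_left _ _ (by positivity : ((p:ℝ)) ≠ 0)]
        refine ⟨((p : ℝ) ^ k)⁻¹ * ∑ j ∈ (Finset.range p).erase j',
            zm k (((b + j * q' : ℕ) : ℝ) / ((p * q' : ℕ) : ℝ)), ?_, ?_⟩
        · refine inv_pow_mem _ _ _ (Submodule.sum_mem _ ?_)
          intro j hj
          have hjne : j ≠ j' := (Finset.mem_erase.mp hj).1
          have hjp : j < p := Finset.mem_range.mp (Finset.mem_erase.mp hj).2
          have hnd : ¬ p ∣ (b + j * q') := by
            intro hd
            apply hjne
            have e1 : ((b + j * q' : ℕ) : ZMod p) = 0 :=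
              (ZMod.natCast_eq_zero_iff _ _).mpr hd
            have e2 : ((b + j' * q' : ℕ) : ZMod p) = 0 :=
              (ZMod.natCast_eq_zero_iff _ _).mpr hdvd
            push_cast at e1 e2
            have e3 : (j : ZMod p) * q' = (j' : ZMod p) * q' := by
              have := sub_eq_zero.mpr (e1.trans e2.symm)
              have e4 : (j : ZMod p) * q' - (j' : ZMod p) * q' = 0 := by
                linear_combination e1 - e2
              have := sub_eq_zero.mp e4
              exact this
            have e5 : (j : ZMod p) = (j' : ZMod p) :=
              mul_right_cancel₀ hqz e3
            have := (ZMod.natCast_eq_natCast_iff _ _ _).mp e5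
            have h6 := Nat.ModEq.eq_of_lt_of_lt this hjp hjlt
            exact h6
          exact zm_mem_of_coprime hq (by omega) (bj_lt (by omega) hjp) (coprime_step hp hb3 hnd)
        · rw [hu]
          show zm k ((b:ℝ)/q') = _
          rw [hexp, hfrac, hεeq]
          push_cast
          ring
    choose σf αf hαlt hrel using key
    have hall := iterate_mem W u σf αf hαlt hrel
    exact hall ⟨b, hb1, hb2, hb3⟩

lemma mem_of_ratmul_eq (W : Submodule ℚ ℝ) {x S : ℝ} {r : ℚ} (hr : r ≠ 0) (hS : S ∈ W)
    (h : S = (r : ℝ) * x) : x ∈ W := by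
  have hx : x = ((r⁻¹ : ℚ) : ℝ) * S := by
    rw [h]
    push_cast
    rw [← mul_assoc, inv_mul_cancel₀ (by exact_mod_cast hr), one_mul]
  rw [hx]
  exact ratmul_mem _ _ hS

lemma S_red {k : ℕ} (hk : 2 ≤ k) :
    ∀ q, 3 ≤ q → ∀ a, 1 ≤ a → 2 * a < q → zetaMinus k a q ∈ Vminus k q := by
  intro q
  induction q using Nat.strong_induction_on with
  | _ q ih =>
    intro hq a ha1 ha2
    by_cases hd : Nat.gcd a q = 1
    · exact gen_mem hq ha1 ha2 hd
    · have hgpos : 0 < Nat.gcd a q := Nat.gcd_pos_of_pos_left _ (by omega)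
      set p := (Nat.gcd a q).minFac with hpdef
      have hp : p.Prime := Nat.minFac_prime hd
      have hp2 : 2 ≤ p := hp.two_le
      have hpa : p ∣ a := dvd_trans (Nat.minFac_dvd _) (Nat.gcd_dvd_left _ _)
      have hpq : p ∣ q := dvd_trans (Nat.minFac_dvd _) (Nat.gcd_dvd_right _ _)
      set a' := a / p with ha'def
      set q' := q / p with hq'def
      have hq'eq : q = p * q' := (Nat.mul_div_cancel' hpq).symm
      have ha'eq : a = p * a' := (Nat.mul_div_cancel' hpa).symm
      have ha'1 : 1 ≤ a' := by
        rcases Nat.eq_zero_or_pos a' with h | h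
        · rw [h, Nat.mul_zero] at ha'eq; omega
        · exact h
      have ha'2 : 2 * a' < q' := by
        have h0 : 2 * (p * a') < p * q' := by rw [← ha'eq, ← hq'eq]; exact ha2
        have h1 : p * (2 * a') < p * q' := by
          calc p * (2 * a') = 2 * (p * a') := by ring
            _ < p * q' := h0
        exact Nat.lt_of_mul_lt_mul_left h1
      have hq'3 : 3 ≤ q' := by omega
      have hqlt : q' < q := by
        rw [hq'eq]
        have h0 : 1 * q' < p * q' :=
          Nat.mul_lt_mul_of_lt_of_le (by omega) (le_refl q') (by omega)
        simpa using h0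
      have hmem : zetaMinus k a' q' ∈ Vminus k q' := ih q' hqlt hq'3 a' ha'1 ha'2
      have hfrac : zetaMinus k a q = zetaMinus k a' q' := by
        rw [zetaMinus_eq_zm, zetaMinus_eq_zm]
        congr 1
        rw [ha'eq, hq'eq]
        push_cast
        rw [mul_div_mul_left _ _ (by positivity : ((p:ℝ)) ≠ 0)]
      rw [hfrac, hq'eq]
      exact Vminus_le hk hp hq'3 hmem

lemma zm_mem_any {k q a : ℕ} (hk : 2 ≤ k) (hq : 3 ≤ q) (h1 : 1 ≤ a) (h2 : a < q)
    (h3 : 2 * a ≠ q) : zm k ((a : ℝ) / q) ∈ Vminus k q := by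
  rcases lt_or_gt_of_ne h3 with h | h
  · rw [← zetaMinus_eq_zm]
    exact S_red hk q hq a h1 h
  · have hfrac : (a : ℝ) / q = 1 - ((q - a : ℕ) : ℝ) / q := by
      rw [Nat.cast_sub (by omega)]
      have : (0:ℝ) < q := by positivity
      field_simp
      ring
    rw [hfrac, zm_symm]
    have hcast : -(-1:ℝ)^k = (((-(-1)^k : ℚ)) : ℝ) := by push_cast; ring
    rw [hcast, ← zetaMinus_eq_zm]
    exact ratmul_mem _ _ (S_red hk q hq (q - a) (by omega) (by omega))

lemma zeta_mem {k q : ℕ} (hk : 2 ≤ k) (hq : 3 ≤ q) (hodd : Odd k) :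
    hzeta k 1 ∈ Vminus k q := by
  have hneg : (-1:ℝ)^k = -1 := Odd.neg_one_pow hodd
  have hq0 : (0:ℝ) < q := by positivity
  have hsum1 : ∑ a ∈ Finset.Ico 1 (q+1), hzeta k ((a:ℝ)/q) = (q:ℝ)^k * hzeta k 1 := by
    rw [Finset.sum_Ico_eq_sum_range]
    simp only [Nat.add_sub_cancel]
    rw [← hzeta_mult hk (show 0 < q by omega) (x := 1) one_pos]
    refine Finset.sum_congr rfl ?_
    intro j _
    congr 1
    push_cast
    ring
  have hsum2 : ∑ a ∈ Finset.Ico 1 q, hzeta k ((a:ℝ)/q) = (q:ℝ)^k * hzeta k 1 - hzeta k 1 := by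
    rw [Finset.sum_Ico_succ_top (show 1 ≤ q by omega)] at hsum1
    have hq1 : ((q:ℝ))/q = 1 := div_self hq0.ne'
    rw [hq1] at hsum1
    linarith
  have hrefl : ∑ a ∈ Finset.Ico 1 q, hzeta k (1 - (a:ℝ)/q)
      = ∑ a ∈ Finset.Ico 1 q, hzeta k ((a:ℝ)/q) := by
    refine Finset.sum_nbij' (fun a => q - a) (fun a => q - a) ?_ ?_ ?_ ?_ ?_
    · intro a ha
      simp only [Finset.mem_Ico] at ha ⊢
      omega
    · intro a ha
      simp only [Finset.mem_Ico] at ha ⊢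
      omega
    · intro a ha
      simp only [Finset.mem_Ico] at ha
      show q - (q - a) = a
      omega
    · intro a ha
      simp only [Finset.mem_Ico] at ha
      show q - (q - a) = a
      omega
    · intro a ha
      simp only [Finset.mem_Ico] at ha
      show hzeta k (1 - (a:ℝ)/q) = hzeta k (((q - a : ℕ):ℝ)/q)
      congr 1
      rw [Nat.cast_sub (by omega)]
      field_simp
  have hzmsum : ∑ a ∈ Finset.Ico 1 q, zm k ((a:ℝ)/q)
      = 2*(q:ℝ)^k * hzeta k 1 - 2 * hzeta k 1 := by
    have hterm : ∀ a ∈ Finset.Ico 1 q,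
        zm k ((a:ℝ)/q) = hzeta k ((a:ℝ)/q) + hzeta k (1 - (a:ℝ)/q) := by
      intro a _
      rw [zm, hneg]
      ring
    rw [Finset.sum_congr rfl hterm, Finset.sum_add_distrib, hrefl, hsum2]
    ring
  rcases Nat.even_or_odd q with hqe | hqo
  · obtain ⟨m, hm⟩ := hqe
    have hmmem : m ∈ Finset.Ico 1 q := by
      rw [Finset.mem_Ico]; omega
    have hsplit := Finset.sum_erase_add (Finset.Ico 1 q) (fun a => zm k ((a:ℝ)/q)) hmmem
    have hm1 : 1 ≤ m := (Finset.mem_Ico.mp hmmem).1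
    have hfm : zm k ((m:ℝ)/q) = 2 * ((2:ℝ)^k - 1) * hzeta k 1 := by
      have hfrac : (m:ℝ)/q = 1/2 := by
        rw [show (q:ℕ) = 2 * m from by omega]
        push_cast
        rw [div_eq_div_iff (by positivity) (by norm_num)]
        ring
      rw [hfrac, zm_half hk, hneg]
      ring
    have hSmem : ∑ a ∈ (Finset.Ico 1 q).erase m, zm k ((a:ℝ)/q) ∈ Vminus k q := by
      refine Submodule.sum_mem _ ?_
      intro a ha
      have h1 := Finset.mem_erase.mp ha
      have h2 := Finset.mem_Ico.mp h1.2
      exact zm_mem_any hk hq (by omega) (by omega) (by omega)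
    have hsplit' : ∑ a ∈ (Finset.Ico 1 q).erase m, zm k ((a:ℝ)/q) + zm k ((m:ℝ)/q)
        = ∑ a ∈ Finset.Ico 1 q, zm k ((a:ℝ)/q) := hsplit
    have hz2 : ∑ a ∈ (Finset.Ico 1 q).erase m, zm k ((a:ℝ)/q) + zm k ((m:ℝ)/q)
        = 2*(q:ℝ)^k * hzeta k 1 - 2 * hzeta k 1 := by rw [hsplit']; exact hzmsum
    have hSval : ∑ a ∈ (Finset.Ico 1 q).erase m, zm k ((a:ℝ)/q)
        = ((2*((q:ℚ)^k - 2^k) : ℚ) : ℝ) * hzeta k 1 := by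
      push_cast
      linear_combination hz2 - hfm
    refine mem_of_ratmul_eq _ ?_ hSmem hSval
    have hlt : (2:ℚ)^k < (q:ℚ)^k := by
      apply pow_lt_pow_left₀ (show (2:ℚ) < (q:ℚ) from by exact_mod_cast (show 2 < q by omega)) (by norm_num)
      omega
    intro hcon
    have : ((q:ℚ))^k = 2^k := by linarith [hcon]
    linarith
  · have hSmem : ∑ a ∈ Finset.Ico 1 q, zm k ((a:ℝ)/q) ∈ Vminus k q := by
      refine Submodule.sum_mem _ ?_
      intro a ha
      have h2 := Finset.mem_Ico.mp ha
      have : 2 * a ≠ q := by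
        intro hcon
        exact (Nat.not_odd_iff_even.mpr ⟨a, by omega⟩) hqo
      exact zm_mem_any hk hq (by omega) (by omega) this
    have hSval : ∑ a ∈ Finset.Ico 1 q, zm k ((a:ℝ)/q)
        = ((2*((q:ℚ)^k - 1) : ℚ) : ℝ) * hzeta k 1 := by
      push_cast
      linear_combination hzmsum
    refine mem_of_ratmul_eq _ ?_ hSmem hSval
    have hlt : (1:ℚ) < (q:ℚ)^k := by
      have h2 : (3:ℚ) ≤ (q:ℚ) := by exact_mod_cast hq
      calc (1:ℚ) = 1^k := (one_pow k).symm
        _ < (q:ℚ)^k := by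
          apply pow_lt_pow_left₀ (by linarith) (by norm_num)
          omega
    intro hcon
    have : ((q:ℚ))^k = 1 := by linarith [hcon]
    linarith

theorem stmt_10 (k q : ℕ) (hk : 2 ≤ k) (hq : 3 ≤ q) :
    Submodule.span ℚ
        (insert (1 : ℝ) (insert (((k % 2 : ℕ) : ℝ) * hzeta k 1)
          {x : ℝ | ∃ a : ℕ, 1 ≤ a ∧ 2 * a < q ∧ x = zetaMinus k a q}))
      = Submodule.span ℚ {(1 : ℝ)} ⊔ Vminus k q ∧
    (Odd k → hzeta k 1 ∈ Vminus k q) := by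
  constructor
  · apply le_antisymm
    · rw [Submodule.span_le]
      intro x hx
      simp only [Set.mem_insert_iff, Set.mem_setOf_eq] at hx
      rcases hx with rfl | rfl | ⟨a, ha1, ha2, rfl⟩
      · exact Submodule.mem_sup_left (Submodule.subset_span rfl)
      · rcases Nat.even_or_odd k with he | ho
        · have h0 : (k % 2 : ℕ) = 0 := Nat.even_iff.mp he
          rw [h0]
          simp only [Nat.cast_zero, zero_mul]
          exact zero_mem _
        · have h0 : (k % 2 : ℕ) = 1 := Nat.odd_iff.mp ho
          rw [h0]
          simp only [Nat.cast_one, one_mul]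
          exact Submodule.mem_sup_right (zeta_mem hk hq ho)
      · exact Submodule.mem_sup_right (S_red hk q hq a ha1 ha2)
    · apply sup_le
      · rw [Submodule.span_le, Set.singleton_subset_iff]
        exact Submodule.subset_span (Set.mem_insert _ _)
      · rw [Vminus, if_neg (by omega), Submodule.span_le]
        rintro x ⟨a, ha1, ha2, _, rfl⟩
        exact Submodule.subset_span
          (Set.mem_insert_iff.mpr (Or.inr (Set.mem_insert_iff.mpr
            (Or.inr ⟨a, ha1, ha2, rfl⟩))))
  · intro ho
    exact zeta_mem hk hq ho
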